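/- arXiv:2405.13561 — 2 statements merged into one kernel-verified Lean document; each statement's English description precedes it below -/
import Mathlib

section
/- For a uniformly random binary word of length n, the number of occurrences of HT (indices i with w_i = H and w_{i+1} = T) equals k with probability C(n+1, 2k+1)/2^n. -/
/-- Number of occurrences of the two-letter pattern `p q` in the word `w`
(indices `i` with `w i = p` and `w (i+1) = q`). `H = true`, `T = false`. -/
def cnt {n : ℕ} (w : Fin n → Bool) (p q : Bool) : ℕ :=
  (Finset.univ.filter (fun i : Fin n =>
    ∃ j : Fin n, (j : ℕ) = (i : ℕ) + 1 ∧ w i = p ∧ w j = q)).card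

lemma cnt_eq {n : ℕ} (w : Fin n → Bool) (p q : Bool) :
    cnt w p q = ∑ i : Fin n, if h : (i : ℕ) + 1 < n then
      (if w i = p ∧ w ⟨(i : ℕ) + 1, h⟩ = q then 1 else 0) else 0 := by
  rw [cnt, Finset.card_filter]
  congr 1
  ext i
  by_cases h : (i : ℕ) + 1 < n
  · rw [dif_pos h]
    congr 1
    apply propext
    constructor
    · rintro ⟨j, hj, h1, h2⟩
      refine ⟨h1, ?_⟩
      have : j = ⟨(i:ℕ)+1, h⟩ := Fin.ext hj
      rwa [this] at h2
    · rintro ⟨h1, h2⟩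
      exact ⟨⟨(i:ℕ)+1, h⟩, rfl, h1, h2⟩
  · rw [dif_neg h, if_neg]
    rintro ⟨j, hj, -⟩
    exact h (hj ▸ j.isLt)

lemma cnt_cons {n : ℕ} (v : Fin (n+1) → Bool) (b p q : Bool) :
    cnt (Fin.cons b v : Fin (n+2) → Bool) p q
      = (if b = p ∧ v 0 = q then 1 else 0) + cnt v p q := by
  rw [cnt_eq, cnt_eq, Fin.sum_univ_succ]
  congr 1
  · apply Finset.sum_congr rfl
    intro i _
    by_cases h : (i : ℕ) + 1 < n + 1
    · have h' : ((Fin.succ i : Fin (n+2)) : ℕ) + 1 < n + 2 := by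
        simp [Fin.val_succ]; omega
      rw [dif_pos h, dif_pos h']
      have e2 : (⟨((Fin.succ i : Fin (n+2)) : ℕ) + 1, h'⟩ : Fin (n+2))
          = Fin.succ ⟨(i:ℕ)+1, h⟩ := by
        ext; simp [Fin.val_succ]
      rw [e2, Fin.cons_succ (α := fun _ : Fin (n+2) => Bool) b v ⟨(i:ℕ)+1, h⟩,
        Fin.cons_succ (α := fun _ : Fin (n+2) => Bool) b v i]
    · have h' : ¬ ((Fin.succ i : Fin (n+2)) : ℕ) + 1 < n + 2 := by
        simp [Fin.val_succ]; omega
      rw [dif_neg h, dif_neg h']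

lemma cnt_one (w : Fin 1 → Bool) (p q : Bool) : cnt w p q = 0 := by
  rw [cnt_eq]
  apply Finset.sum_eq_zero
  intro i _
  rw [dif_neg (by omega)]

lemma cnt_zero (w : Fin 0 → Bool) (p q : Bool) : cnt w p q = 0 := by
  simp [cnt]

lemma card_bij_step (n k : ℕ) (b c : Bool) :
    (Finset.univ.filter (fun w : Fin (n+2) → Bool =>
        (cnt w true false = k ∧ w 0 = b) ∧ w 1 = c)).card
      = (Finset.univ.filter (fun v : Fin (n+1) → Bool =>
        (if b = true ∧ c = false then 1 else 0) + cnt v true false = k ∧ v 0 = c)).card := by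
  refine Finset.card_nbij' (fun w => Fin.tail w) (fun v => Fin.cons b v) ?_ ?_ ?_ ?_
  · intro w hw
    simp only [Finset.coe_filter, Set.mem_setOf_eq, Finset.mem_coe, Finset.mem_filter, Finset.mem_univ, true_and] at hw ⊢
    obtain ⟨⟨hc, h0⟩, h1⟩ := hw
    have hw' : w = Fin.cons b (Fin.tail w) := by
      rw [← h0]; exact (Fin.cons_self_tail w).symm
    have ht0 : Fin.tail w 0 = w 1 := rfl
    constructor
    · rw [← hc]
      conv_rhs => rw [hw', cnt_cons]
      rw [ht0, h1]
    · rw [ht0, h1]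
  · intro v hv
    simp only [Finset.coe_filter, Set.mem_setOf_eq, Finset.mem_coe, Finset.mem_filter, Finset.mem_univ, true_and] at hv ⊢
    obtain ⟨hc, h0⟩ := hv
    refine ⟨⟨?_, ?_⟩, ?_⟩
    · rw [cnt_cons, h0, hc]
    · exact Fin.cons_zero (α := fun _ : Fin (n+2) => Bool) b v
    · have h1 : (1 : Fin (n+2)) = Fin.succ 0 := rfl
      rw [h1, Fin.cons_succ (α := fun _ : Fin (n+2) => Bool)]
      exact h0
  · intro w hw
    simp only [Finset.coe_filter, Set.mem_setOf_eq, Finset.mem_coe, Finset.mem_filter, Finset.mem_univ, true_and] at hw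
    rw [← hw.1.2]
    exact Fin.cons_self_tail w
  · intro v _
    exact Fin.tail_cons (α := fun _ : Fin (n+2) => Bool) b v

lemma count_first (n : ℕ) : ∀ (k : ℕ) (b : Bool),
    (Finset.univ.filter (fun w : Fin (n+1) → Bool =>
        cnt w true false = k ∧ w 0 = b)).card
      = if b then (n+1).choose (2*k) else (n+1).choose (2*k+1) := by
  induction n with
  | zero =>
    intro k b
    cases k with
    | zero =>
      have h1 : (Finset.univ.filter (fun w : Fin 1 → Bool =>
          cnt w true false = 0 ∧ w 0 = b)).card = 1 := by
        rw [Finset.card_eq_one]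
        refine ⟨fun _ => b, ?_⟩
        ext w
        simp only [Finset.mem_filter, Finset.mem_univ, true_and, Finset.mem_singleton,
          cnt_one, true_and]
        constructor
        · intro h; funext i
          have : i = 0 := Subsingleton.elim i 0
          rw [this, h]
        · intro h; subst h; exact rfl
      rw [h1]
      cases b <;> simp
    | succ k =>
      have c1 : Nat.choose 1 (2*(k+1)) = 0 := by
        apply Nat.choose_eq_zero_of_lt; omega
      have c2 : Nat.choose 1 (2*(k+1)+1) = 0 := by
        apply Nat.choose_eq_zero_of_lt; omega
      have h1 : (Finset.univ.filter (fun w : Fin 1 → Bool =>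
          cnt w true false = k + 1 ∧ w 0 = b)).card = 0 := by
        rw [Finset.card_eq_zero, Finset.filter_eq_empty_iff]
        intro w _
        rw [cnt_one]
        simp
      rw [h1]
      cases b <;> simp [c1, c2]
  | succ n ih =>
    intro k b
    have split : (Finset.univ.filter (fun w : Fin (n+2) → Bool =>
          cnt w true false = k ∧ w 0 = b)).card
        = (Finset.univ.filter (fun w : Fin (n+2) → Bool =>
            (cnt w true false = k ∧ w 0 = b) ∧ w 1 = true)).card
          + (Finset.univ.filter (fun w : Fin (n+2) → Bool =>
            (cnt w true false = k ∧ w 0 = b) ∧ w 1 = false)).card := by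
      have h := Finset.card_filter_add_card_filter_not
        (s := Finset.univ.filter (fun w : Fin (n+2) → Bool =>
          cnt w true false = k ∧ w 0 = b))
        (fun w : Fin (n+2) → Bool => w 1 = true)
      rw [Finset.filter_filter, Finset.filter_filter] at h
      rw [← h]
      congr 1
      apply congrArg Finset.card
      apply Finset.filter_congr
      intro w _
      simp
    rw [split, card_bij_step, card_bij_step]
    clear split
    cases b with
    | false =>
      have h1 := ih k true
      have h2 := ih k false
      norm_num at h1 h2 ⊢
      rw [h1, h2, Nat.choose_succ_succ (n+1) (2*k)]
    | true =>
      have h1 := ih k true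
      norm_num at h1 ⊢
      rw [h1]
      clear h1
      cases k with
      | zero =>
        have e2 : (Finset.univ.filter (fun v : Fin (n+1) → Bool =>
              1 + cnt v true false = 0 ∧ v 0 = false)).card = 0 := by
          rw [Finset.card_eq_zero, Finset.filter_eq_empty_iff]
          intro v _
          simp
        rw [e2]
        simp
      | succ k =>
        have h2 := ih k false
        norm_num at h2
        have e2 : (Finset.univ.filter (fun v : Fin (n+1) → Bool =>
              1 + cnt v true false = k + 1 ∧ v 0 = false)).card
            = (n+1).choose (2*k+1) := by
          rw [← h2]
          clear h2 ih
          apply congrArg Finset.card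
          apply Finset.filter_congr
          intro v _
          constructor
          · rintro ⟨h, h'⟩
            refine ⟨?_, h'⟩
            omega
          · rintro ⟨h, h'⟩
            refine ⟨?_, h'⟩
            omega
        rw [e2]
        clear e2 h2 ih
        have e3 : 2 * (k+1) = (2*k+1) + 1 := by ring
        rw [e3, Nat.choose_succ_succ (n+1) (2*k+1)]
        exact Nat.add_comm _ _

theorem stmt4 (n k : ℕ) :
    ((Finset.univ.filter (fun w : Fin n → Bool => cnt w true false = k)).card : ℚ) / 2 ^ n
      = (Nat.choose (n + 1) (2 * k + 1) : ℚ) / 2 ^ n := by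
  have key : (Finset.univ.filter (fun w : Fin n → Bool => cnt w true false = k)).card
      = (n + 1).choose (2 * k + 1) := by
    cases n with
    | zero =>
      cases k with
      | zero =>
        rw [Finset.filter_true_of_mem (fun w _ => cnt_zero w true false)]
        simp
      | succ k =>
        have c1 : Nat.choose 1 (2*(k+1)+1) = 0 := by
          apply Nat.choose_eq_zero_of_lt; omega
        rw [c1, Finset.card_eq_zero, Finset.filter_eq_empty_iff]
        intro w _
        rw [cnt_zero]
        simp
    | succ m =>
      have h := Finset.card_filter_add_card_filter_not
        (s := Finset.univ.filter (fun w : Fin (m+1) → Bool => cnt w true false = k))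
        (fun w : Fin (m+1) → Bool => w 0 = true)
      rw [Finset.filter_filter, Finset.filter_filter] at h
      rw [← h]
      have e1 := count_first m k true
      have e2 := count_first m k false
      norm_num at e1 e2
      have r1 : (Finset.univ.filter (fun w : Fin (m+1) → Bool =>
            cnt w true false = k ∧ w 0 = true)).card
          + (Finset.univ.filter (fun w : Fin (m+1) → Bool =>
            cnt w true false = k ∧ ¬ w 0 = true)).card
          = (m+1).choose (2*k) + (m+1).choose (2*k+1) := by
        rw [e1]
        congr 1
        rw [← e2]
        apply congrArg Finset.card
        apply Finset.filter_congr
        intro w _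
        simp
      rw [r1, Nat.choose_succ_succ (m+1) (2*k)]
  rw [key]
end

section
/- For all n ≥ 2, the probability that the number of HH occurrences strictly exceeds the number of HT occurrences in n fair coin tosses is at most 1/2 − 1/2^n. -/
set_option linter.unusedTactic false
set_option linter.deprecated false

open Finset

/-- convolution of sequences -/
def conv (a b : ℕ → ℕ) (n : ℕ) : ℕ := ∑ i ∈ Finset.range (n+1), a i * b (n - i)

lemma conv_eq_coeff (a b : ℕ → ℕ) (n : ℕ) :
    conv a b n = PowerSeries.coeff n (PowerSeries.mk a * PowerSeries.mk b) := by
  rw [PowerSeries.coeff_mul, Finset.Nat.sum_antidiagonal_eq_sum_range_succ_mk]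
  simp [conv]

lemma mk_conv (a b : ℕ → ℕ) :
    PowerSeries.mk (conv a b) = PowerSeries.mk a * PowerSeries.mk b := by
  apply PowerSeries.ext
  intro n
  rw [PowerSeries.coeff_mk, conv_eq_coeff]

lemma conv_pt (a b : ℕ → ℕ) (n : ℕ) :
    conv a b n = PowerSeries.coeff n (PowerSeries.mk a * PowerSeries.mk b) :=
  conv_eq_coeff a b n

lemma conv_comm (a b : ℕ → ℕ) : conv a b = conv b a := by
  funext n
  rw [conv_eq_coeff, conv_eq_coeff, mul_comm]

lemma conv_assoc (a b c : ℕ → ℕ) : conv (conv a b) c = conv a (conv b c) := by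
  funext n
  rw [conv_eq_coeff, conv_eq_coeff, mk_conv, mk_conv, mul_assoc]

/-- delta sequence -/
def delta : ℕ → ℕ := fun n => if n = 0 then 1 else 0

lemma conv_delta_right (a : ℕ → ℕ) : conv a delta = a := by
  funext n
  rw [conv_eq_coeff]
  have : PowerSeries.mk delta = 1 := by
    apply PowerSeries.ext
    intro k
    rw [PowerSeries.coeff_mk]
    simp [delta, PowerSeries.coeff_one]
  rw [this, mul_one, PowerSeries.coeff_mk]

lemma conv_delta_left (a : ℕ → ℕ) : conv delta a = a := by
  rw [conv_comm, conv_delta_right]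

/-- the base first-passage sequence -/
def fseq : ℕ → ℕ
  | 0 => 0
  | 1 => 1
  | (n + 2) =>
      ∑ i ∈ (Finset.range (n+2)).attach,
        fseq i.1 * ∑ j ∈ (Finset.range (n + 1 - i.1)).attach, fseq j.1
  termination_by n => n
  decreasing_by
  · exact Finset.mem_range.mp i.2
  · have hi := Finset.mem_range.mp i.2
    have hj := Finset.mem_range.mp j.2
    omega

/-- cumulative sums of fseq -/
def gseq (n : ℕ) : ℕ := ∑ j ∈ Finset.range n, fseq j

lemma fseq_zero : fseq 0 = 0 := by rw [fseq]
lemma fseq_one : fseq 1 = 1 := by rw [fseq]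

lemma gseq_zero : gseq 0 = 0 := by simp [gseq]
lemma gseq_succ (n : ℕ) : gseq (n+1) = gseq n + fseq n := Finset.sum_range_succ _ n

lemma fseq_add_two (n : ℕ) : fseq (n + 2) = conv fseq gseq (n + 1) := by
  rw [fseq]
  rw [Finset.sum_attach (Finset.range (n+2)) (fun i => fseq i * ∑ j ∈ (Finset.range (n + 1 - i)).attach, fseq j)]
  · unfold conv gseq
    apply Finset.sum_congr rfl
    intro i _
    congr 1
    exact Finset.sum_attach _ _

lemma fseq_succ (n : ℕ) : fseq (n + 1) = delta n + conv fseq gseq n := by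
  cases n with
  | zero => simp [fseq_one, delta, conv, fseq_zero, gseq_zero]
  | succ m =>
      rw [fseq_add_two]
      simp [delta]
lemma shiftF (h : ℕ → ℕ) (ℓ : ℕ) :
    conv fseq h (ℓ+1) = h ℓ + conv (conv fseq gseq) h ℓ := by
  unfold conv
  rw [Finset.sum_range_succ']
  rw [fseq_zero]
  simp only [zero_mul, add_zero]
  have : ∀ i ∈ Finset.range (ℓ+1), fseq (i+1) * h (ℓ + 1 - (i+1)) =
      delta i * h (ℓ - i) + conv fseq gseq i * h (ℓ - i) := by
    intro i _
    have e : ℓ + 1 - (i+1) = ℓ - i := by omega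
    rw [e, fseq_succ, add_mul]
  rw [Finset.sum_congr rfl this, Finset.sum_add_distrib]
  congr 1
  have : ∑ i ∈ Finset.range (ℓ+1), delta i * h (ℓ - i) = conv delta h ℓ := rfl
  rw [this, conv_delta_left]

lemma shiftG (h : ℕ → ℕ) (ℓ : ℕ) :
    conv gseq h (ℓ+1) = conv gseq h ℓ + conv fseq h ℓ := by
  unfold conv
  rw [Finset.sum_range_succ']
  rw [gseq_zero]
  simp only [zero_mul, add_zero]
  have : ∀ i ∈ Finset.range (ℓ+1), gseq (i+1) * h (ℓ + 1 - (i+1)) =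
      gseq i * h (ℓ - i) + fseq i * h (ℓ - i) := by
    intro i _
    have e : ℓ + 1 - (i+1) = ℓ - i := by omega
    rw [e, gseq_succ, add_mul]
  rw [Finset.sum_congr rfl this, Finset.sum_add_distrib]

/-- upward first-passage families -/
def fpT : ℕ → ℕ → ℕ
  | 0 => delta
  | (k+1) => conv gseq (fpT k)

def fpU (k : ℕ) : ℕ → ℕ := conv fseq (fpT k)

/-- downward first-passage families -/
def fdH : ℕ → ℕ → ℕ
  | 0 => delta
  | (k+1) => conv fseq (fdH k)

def fdU (k : ℕ) : ℕ → ℕ := conv gseq (fdH k)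

lemma L1 (k ℓ : ℕ) : fpU k (ℓ+1) = fpT k ℓ + fpU (k+1) ℓ := by
  unfold fpU
  rw [shiftF, conv_assoc]
  rfl

lemma L2 (k ℓ : ℕ) : fpT (k+1) (ℓ+1) = fpT (k+1) ℓ + fpU k ℓ := by
  show conv gseq (fpT k) (ℓ+1) = conv gseq (fpT k) ℓ + fpU k ℓ
  rw [shiftG]
  rfl

lemma L3 (k ℓ : ℕ) : fdU k (ℓ+1) = fdU k ℓ + fdH (k+1) ℓ := by
  unfold fdU
  rw [shiftG]
  rfl

lemma L4 (k ℓ : ℕ) : fdH (k+1) (ℓ+1) = fdH k ℓ + fdU (k+1) ℓ := by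
  show conv fseq (fdH k) (ℓ+1) = fdH k ℓ + fdU (k+1) ℓ
  rw [shiftF]
  congr 1
  show conv (conv fseq gseq) (fdH k) ℓ = conv gseq (conv fseq (fdH k)) ℓ
  rw [conv_comm fseq gseq, conv_assoc]

lemma fpU_zero (k : ℕ) : fpU k 0 = 0 := by simp [fpU, conv, fseq_zero]
lemma fpT_succ_zero (k : ℕ) : fpT (k+1) 0 = 0 := by
  show conv gseq (fpT k) 0 = 0
  simp [conv, gseq_zero]
lemma fdH_succ_zero (k : ℕ) : fdH (k+1) 0 = 0 := by
  show conv fseq (fdH k) 0 = 0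
  simp [conv, fseq_zero]
lemma fdU_zero (k : ℕ) : fdU k 0 = 0 := by simp [fdU, conv, gseq_zero]

lemma fpU_zero_eq_fseq : fpU 0 = fseq := by
  show conv fseq delta = fseq
  exact conv_delta_right fseq

lemma fdU_zero_eq_gseq : fdU 0 = gseq := by
  show conv gseq delta = gseq
  exact conv_delta_right gseq
/-- `NN m s j` = number of words of length m (walk from state s) with final D ≥ j -/
def NN : ℕ → Bool → ℤ → ℕ
  | 0, _, j => if j ≤ 0 then 1 else 0
  | (m+1), true, j => NN m true (j+1) + NN m false (j-1)
  | (m+1), false, j => NN m false j + NN m true j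

/-- `MM m s j` = number of words with final D ≤ j -/
def MM : ℕ → Bool → ℤ → ℕ
  | 0, _, j => if 0 ≤ j then 1 else 0
  | (m+1), true, j => MM m true (j+1) + MM m false (j-1)
  | (m+1), false, j => MM m false j + MM m true j

lemma NN_zero (s : Bool) (j : ℤ) : NN 0 s j = if j ≤ 0 then 1 else 0 := by cases s <;> rfl
lemma NN_succ_true (m : ℕ) (j : ℤ) : NN (m+1) true j = NN m true (j+1) + NN m false (j-1) := rfl
lemma NN_succ_false (m : ℕ) (j : ℤ) : NN (m+1) false j = NN m false j + NN m true j := rfl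
lemma MM_zero (s : Bool) (j : ℤ) : MM 0 s j = if 0 ≤ j then 1 else 0 := by cases s <;> rfl
lemma MM_succ_true (m : ℕ) (j : ℤ) : MM (m+1) true j = MM m true (j+1) + MM m false (j-1) := rfl
lemma MM_succ_false (m : ℕ) (j : ℤ) : MM (m+1) false j = MM m false j + MM m true j := rfl

lemma NN_MM_compl : ∀ (m : ℕ) (s : Bool) (j : ℤ), NN m s j + MM m s (j-1) = 2^m := by
  intro m
  induction m with
  | zero =>
      intro s j
      rw [NN_zero, MM_zero, pow_zero]
      by_cases h : j ≤ 0
      · rw [if_pos h, if_neg (by omega)]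
        omega
      · rw [if_neg h, if_pos (by omega)]
        omega
  | succ m ih =>
      intro s j
      have hp : (2:ℕ)^(m+1) = 2^m + 2^m := by ring
      cases s with
      | true =>
          rw [NN_succ_true, MM_succ_true]
          have h1 := ih true (j+1)
          have h2 := ih false (j-1)
          have e1 : j - 1 + 1 = j + 1 - 1 := by ring
          rw [e1]
          omega
      | false =>
          rw [NN_succ_false, MM_succ_false]
          have h1 := ih false j
          have h2 := ih true j
          omega

lemma sum_delta_mul (F : ℕ → ℕ) (n : ℕ) :
    ∑ ℓ ∈ Finset.range (n+1), delta ℓ * F ℓ = F 0 := by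
  unfold delta
  rw [Finset.sum_congr rfl (fun ℓ _ => by rw [ite_mul, one_mul, zero_mul])]
  rw [Finset.sum_ite_eq' (Finset.range (n+1)) 0 F]
  simp

lemma fpT_zero_eq : fpT 0 = delta := rfl
lemma fdH_zero_eq : fdH 0 = delta := rfl

/-- upward first-passage identities, jointly -/
lemma JTJH : ∀ (m : ℕ),
    (∀ (k : ℕ) (j : ℤ), (k:ℤ) ≤ j →
      NN m false j = ∑ ℓ ∈ Finset.range (m+1), fpT k ℓ * NN (m-ℓ) false (j - k)) ∧
    (∀ (k : ℕ) (j : ℤ), (k:ℤ) + 1 ≤ j →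
      NN m true j = ∑ ℓ ∈ Finset.range (m+1), fpU k ℓ * NN (m-ℓ) false (j - k - 1)) := by
  intro m
  induction m with
  | zero =>
      constructor
      · intro k j hkj
        rw [Finset.sum_range_succ, Finset.sum_range_zero, zero_add, Nat.sub_zero]
        cases k with
        | zero =>
            rw [fpT_zero_eq]
            show NN 0 false j = delta 0 * NN 0 false (j - 0)
            simp [delta]
        | succ k' =>
            rw [fpT_succ_zero, zero_mul, NN_zero, if_neg (by push_cast at hkj; omega)]
      · intro k j hkj
        rw [Finset.sum_range_succ, Finset.sum_range_zero, zero_add, Nat.sub_zero]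
        rw [fpU_zero, zero_mul, NN_zero, if_neg (by omega)]
  | succ m ih =>
      obtain ⟨ihT, ihH⟩ := ih
      constructor
      · -- JT at m+1
        intro k j hkj
        cases k with
        | zero =>
            have : ∀ ℓ ∈ Finset.range (m+1+1),
                fpT 0 ℓ * NN (m+1-ℓ) false (j - (0:ℕ)) = delta ℓ * NN (m+1-ℓ) false (j - (0:ℕ)) := by
              intro ℓ _; rw [fpT_zero_eq]
            rw [Finset.sum_congr rfl this,
               sum_delta_mul (fun ℓ => NN (m+1-ℓ) false (j - (0:ℕ))) (m+1)]
            simp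
        | succ k' =>
            have hkj' : (k':ℤ) + 1 ≤ j := by push_cast at hkj; omega
            have h1 := ihT (k'+1) j (by push_cast; omega)
            push_cast at h1
            have h2 := ihH k' j hkj'
            push_cast at h2
            push_cast
            rw [Finset.sum_range_succ']
            rw [fpT_succ_zero, zero_mul, add_zero]
            have step : ∀ ℓ ∈ Finset.range (m+1),
                fpT (k'+1) (ℓ+1) * NN (m+1-(ℓ+1)) false (j - ((k':ℤ)+1)) =
                fpT (k'+1) ℓ * NN (m-ℓ) false (j - ((k':ℤ)+1))
                  + fpU k' ℓ * NN (m-ℓ) false (j - (k':ℤ) - 1) := by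
              intro ℓ _
              have e1 : m + 1 - (ℓ+1) = m - ℓ := by omega
              have e2 : j - ((k':ℤ)+1) = j - (k':ℤ) - 1 := by ring
              rw [e1, L2, add_mul, e2]
            rw [Finset.sum_congr rfl step, Finset.sum_add_distrib, ← h1, ← h2,
               NN_succ_false]
      · -- JH at m+1
        intro k j hkj
        have h1 := ihT k (j-1) (by omega)
        have h2 := ihH (k+1) (j+1) (by push_cast; omega)
        push_cast at h1 h2
        rw [Finset.sum_range_succ']
        rw [fpU_zero, zero_mul, add_zero]
        have step : ∀ ℓ ∈ Finset.range (m+1),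
            fpU k (ℓ+1) * NN (m+1-(ℓ+1)) false (j - (k:ℤ) - 1) =
            fpT k ℓ * NN (m-ℓ) false ((j-1) - (k:ℤ))
              + fpU (k+1) ℓ * NN (m-ℓ) false ((j+1) - ((k:ℤ)+1) - 1) := by
          intro ℓ _
          have e1 : m + 1 - (ℓ+1) = m - ℓ := by omega
          have e2 : j - (k:ℤ) - 1 = (j-1) - (k:ℤ) := by ring
          have e3 : j - (k:ℤ) - 1 = (j+1) - ((k:ℤ)+1) - 1 := by ring
          rw [e1, L1, add_mul]
          congr 2
          · rw [e2]
          · rw [e3]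
        rw [Finset.sum_congr rfl step, Finset.sum_add_distrib, ← h1, ← h2,
           NN_succ_true]
        omega

/-- downward first-passage identities, jointly -/
lemma KHKT : ∀ (m : ℕ),
    (∀ (k : ℕ) (j : ℤ), j ≤ -(k:ℤ) →
      MM m true j = ∑ ℓ ∈ Finset.range (m+1), fdH k ℓ * MM (m-ℓ) true (j + k)) ∧
    (∀ (k : ℕ) (j : ℤ), j ≤ -(k:ℤ) - 1 →
      MM m false j = ∑ ℓ ∈ Finset.range (m+1), fdU k ℓ * MM (m-ℓ) true (j + k + 1)) := by
  intro m
  induction m with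
  | zero =>
      constructor
      · intro k j hkj
        rw [Finset.sum_range_succ, Finset.sum_range_zero, zero_add, Nat.sub_zero]
        cases k with
        | zero =>
            rw [fdH_zero_eq]
            show MM 0 true j = delta 0 * MM 0 true (j + 0)
            simp [delta]
        | succ k' =>
            rw [fdH_succ_zero, zero_mul, MM_zero, if_neg (by push_cast at hkj; omega)]
      · intro k j hkj
        rw [Finset.sum_range_succ, Finset.sum_range_zero, zero_add, Nat.sub_zero]
        rw [fdU_zero, zero_mul, MM_zero, if_neg (by omega)]
  | succ m ih =>
      obtain ⟨ihH, ihT⟩ := ih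
      constructor
      · -- KH at m+1
        intro k j hkj
        cases k with
        | zero =>
            have : ∀ ℓ ∈ Finset.range (m+1+1),
                fdH 0 ℓ * MM (m+1-ℓ) true (j + (0:ℕ)) = delta ℓ * MM (m+1-ℓ) true (j + (0:ℕ)) := by
              intro ℓ _; rw [fdH_zero_eq]
            rw [Finset.sum_congr rfl this,
               sum_delta_mul (fun ℓ => MM (m+1-ℓ) true (j + (0:ℕ))) (m+1)]
            simp
        | succ k' =>
            have h1 := ihH k' (j+1) (by push_cast at hkj ⊢; omega)
            have h2 := ihT (k'+1) (j-1) (by push_cast at hkj ⊢; omega)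
            push_cast at h1 h2
            push_cast
            rw [Finset.sum_range_succ']
            rw [fdH_succ_zero, zero_mul, add_zero]
            have step : ∀ ℓ ∈ Finset.range (m+1),
                fdH (k'+1) (ℓ+1) * MM (m+1-(ℓ+1)) true (j + ((k':ℤ)+1)) =
                fdH k' ℓ * MM (m-ℓ) true ((j+1) + (k':ℤ))
                  + fdU (k'+1) ℓ * MM (m-ℓ) true ((j-1) + ((k':ℤ)+1) + 1) := by
              intro ℓ _
              have e1 : m + 1 - (ℓ+1) = m - ℓ := by omega
              have e2 : j + ((k':ℤ)+1) = (j+1) + (k':ℤ) := by ring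
              have e3 : j + ((k':ℤ)+1) = (j-1) + ((k':ℤ)+1) + 1 := by ring
              rw [e1, L4, add_mul]
              congr 2
              · rw [e2]
              · rw [e3]
            rw [Finset.sum_congr rfl step, Finset.sum_add_distrib, ← h1, ← h2,
               MM_succ_true]
      · -- KT at m+1
        intro k j hkj
        have h1 := ihT k j hkj
        have h2 := ihH (k+1) j (by push_cast at hkj ⊢; omega)
        push_cast at h1 h2
        push_cast
        rw [Finset.sum_range_succ']
        rw [fdU_zero, zero_mul, add_zero]
        have step : ∀ ℓ ∈ Finset.range (m+1),
            fdU k (ℓ+1) * MM (m+1-(ℓ+1)) true (j + (k:ℤ) + 1) =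
            fdU k ℓ * MM (m-ℓ) true (j + (k:ℤ) + 1)
              + fdH (k+1) ℓ * MM (m-ℓ) true (j + ((k:ℤ)+1)) := by
          intro ℓ _
          have e1 : m + 1 - (ℓ+1) = m - ℓ := by omega
          have e2 : j + (k:ℤ) + 1 = j + ((k:ℤ)+1) := by ring
          rw [e1, L3, add_mul]
          congr 2
          rw [e2]
        rw [Finset.sum_congr rfl step, Finset.sum_add_distrib, ← h1, ← h2,
           MM_succ_false]
def gH (m : ℕ) : ℤ := 2 * NN m true 0 - 2^m
def gT (m : ℕ) : ℤ := 2 * NN m false 0 - 2^m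
def Sf (s : ℕ) : ℤ := ∑ j ∈ Finset.range (s+1), (fseq j : ℤ)

lemma Sf_nonneg (s : ℕ) : 0 ≤ Sf s :=
  Finset.sum_nonneg (fun j _ => by positivity)

lemma gseq_cast (s : ℕ) : (gseq (s+1) : ℤ) = Sf s := by
  unfold gseq Sf
  push_cast
  rfl

lemma tele : ∀ s : ℕ,
    ∑ ℓ ∈ Finset.range (s+1), ((fseq ℓ : ℤ) - (gseq ℓ : ℤ)) * 2^(s-ℓ) = Sf s := by
  intro s
  induction s with
  | zero =>
      simp [Sf, fseq_zero, gseq_zero]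
  | succ s ih =>
      rw [Finset.sum_range_succ]
      have e : ∀ ℓ ∈ Finset.range (s+1),
          ((fseq ℓ : ℤ) - gseq ℓ) * 2^(s+1-ℓ) = 2 * (((fseq ℓ : ℤ) - gseq ℓ) * 2^(s-ℓ)) := by
        intro ℓ hℓ
        have hl : ℓ ≤ s := by
          have := Finset.mem_range.mp hℓ; omega
        have : s + 1 - ℓ = (s - ℓ) + 1 := by omega
        rw [this, pow_succ]
        ring
      rw [Finset.sum_congr rfl e, ← Finset.mul_sum, ih]
      have e2 : (s+1) - (s+1) = 0 := by omega
      rw [e2, pow_zero, mul_one]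
      have e3 : (gseq (s+1) : ℤ) = Sf s := gseq_cast s
      have e4 : Sf (s+1) = Sf s + (fseq (s+1) : ℤ) := by
        unfold Sf
        rw [Finset.sum_range_succ]
      rw [e4, e3]
      ring

lemma starId (s : ℕ) :
    gH (s+1) = (∑ ℓ ∈ Finset.range (s+1), (fseq ℓ : ℤ) * gT (s-ℓ))
      + (∑ ℓ ∈ Finset.range (s+1), (gseq ℓ : ℤ) * gH (s-ℓ)) + Sf s := by
  -- abbreviate the five sums
  set S1 : ℤ := ∑ ℓ ∈ Finset.range (s+1), (fseq ℓ : ℤ) * (NN (s-ℓ) false 0 : ℤ) with hS1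
  set S2 : ℤ := ∑ ℓ ∈ Finset.range (s+1), (gseq ℓ : ℤ) * (NN (s-ℓ) true 0 : ℤ) with hS2
  set S3 : ℤ := ∑ ℓ ∈ Finset.range (s+1), (fseq ℓ : ℤ) * 2^(s-ℓ) with hS3
  set S4 : ℤ := ∑ ℓ ∈ Finset.range (s+1), (gseq ℓ : ℤ) * 2^(s-ℓ) with hS4
  -- (E1)
  have jh := (JTJH s).2 0 1 (by norm_num)
  rw [fpU_zero_eq_fseq] at jh
  have e1 : (NN s true 1 : ℤ) = S1 := by
    rw [hS1]
    have : (1:ℤ) - ((0:ℕ):ℤ) - 1 = 0 := by norm_num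
    rw [this] at jh
    exact_mod_cast jh
  -- (E2)
  have kt := (KHKT s).2 0 (-2) (by norm_num)
  rw [fdU_zero_eq_gseq] at kt
  have e2 : (MM s false (-2) : ℤ) = ∑ ℓ ∈ Finset.range (s+1), (gseq ℓ : ℤ) * (MM (s-ℓ) true (-1) : ℤ) := by
    have : (-2:ℤ) + ((0:ℕ):ℤ) + 1 = -1 := by norm_num
    rw [this] at kt
    exact_mod_cast kt
  -- complement facts
  have c1 : (NN s false (-1) : ℤ) = 2^s - MM s false (-2) := by
    have := NN_MM_compl s false (-1)
    have e : (-1:ℤ) - 1 = -2 := by ring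
    rw [e] at this
    have := congrArg (Nat.cast : ℕ → ℤ) this
    push_cast at this
    linarith
  have c2 : ∀ u : ℕ, (MM u true (-1) : ℤ) = 2^u - NN u true 0 := by
    intro u
    have := NN_MM_compl u true 0
    have e : (0:ℤ) - 1 = -1 := by ring
    rw [e] at this
    have := congrArg (Nat.cast : ℕ → ℤ) this
    push_cast at this
    linarith
  -- S5 = S4 - S2
  have e5 : ∑ ℓ ∈ Finset.range (s+1), (gseq ℓ : ℤ) * (MM (s-ℓ) true (-1) : ℤ) = S4 - S2 := by
    rw [hS4, hS2, ← Finset.sum_sub_distrib]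
    apply Finset.sum_congr rfl
    intro ℓ _
    rw [c2 (s-ℓ)]
    ring
  -- target RHS sums
  have r1 : ∑ ℓ ∈ Finset.range (s+1), (fseq ℓ : ℤ) * gT (s-ℓ) = 2*S1 - S3 := by
    rw [hS1, hS3, Finset.mul_sum, ← Finset.sum_sub_distrib]
    apply Finset.sum_congr rfl
    intro ℓ _
    unfold gT
    ring
  have r2 : ∑ ℓ ∈ Finset.range (s+1), (gseq ℓ : ℤ) * gH (s-ℓ) = 2*S2 - S4 := by
    rw [hS2, hS4, Finset.mul_sum, ← Finset.sum_sub_distrib]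
    apply Finset.sum_congr rfl
    intro ℓ _
    unfold gH
    ring
  have rt : S3 - S4 = Sf s := by
    rw [hS3, hS4, ← Finset.sum_sub_distrib, ← tele s]
    apply Finset.sum_congr rfl
    intro ℓ _
    ring
  -- LHS
  have lhs : gH (s+1) = 2*S1 + 2*S2 - 2*S4 := by
    unfold gH
    rw [NN_succ_true]
    push_cast
    rw [e1, c1, e2, e5]
    ring
  rw [lhs, r1, r2, ← rt]
  ring

lemma gT_succ (s : ℕ) : gT (s+1) = gT s + gH s := by
  unfold gT gH
  rw [NN_succ_false]
  push_cast
  ring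

lemma g_nonneg : ∀ m : ℕ, 0 ≤ gH m ∧ 0 ≤ gT m := by
  intro m
  induction m using Nat.strong_induction_on with
  | _ m ih =>
      cases m with
      | zero =>
          constructor
          · show (0:ℤ) ≤ 2 * NN 0 true 0 - 2^0
            rw [NN_zero, if_pos (by omega)]
            norm_num
          · show (0:ℤ) ≤ 2 * NN 0 false 0 - 2^0
            rw [NN_zero, if_pos (by omega)]
            norm_num
      | succ s =>
          constructor
          · rw [starId s]
            have h1 : 0 ≤ ∑ ℓ ∈ Finset.range (s+1), (fseq ℓ : ℤ) * gT (s-ℓ) := by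
              apply Finset.sum_nonneg
              intro ℓ _
              exact mul_nonneg (by positivity) (ih (s-ℓ) (by omega)).2
            have h2 : 0 ≤ ∑ ℓ ∈ Finset.range (s+1), (gseq ℓ : ℤ) * gH (s-ℓ) := by
              apply Finset.sum_nonneg
              intro ℓ _
              exact mul_nonneg (by positivity) (ih (s-ℓ) (by omega)).1
            have := Sf_nonneg s
            linarith
          · rw [gT_succ]
            have ha := (ih s (by omega)).1
            have hb := (ih s (by omega)).2
            linarith

lemma gT_ge_two : ∀ n : ℕ, 1 ≤ n → 2 ≤ gT n := by
  intro n
  induction n with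
  | zero => omega
  | succ s ih =>
      intro _
      cases Nat.eq_or_lt_of_le (Nat.one_le_iff_ne_zero.mpr (Nat.succ_ne_zero s)) with
      | _ =>
        cases s with
        | zero =>
            show 2 ≤ 2 * (NN 1 false 0 : ℤ) - 2^1
            have : NN 1 false 0 = 2 := by
              rw [NN_succ_false, NN_zero, NN_zero, if_pos (by omega)]
            rw [this]
            norm_num
        | succ t =>
            rw [gT_succ]
            have h1 := ih (by omega)
            have h2 := (g_nonneg (t+1)).1
            linarith

/-- Main counting bound: for n ≥ 1, 2^n + 2 ≤ 2 * (number of words with D ≥ 0). -/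
lemma main_count (n : ℕ) (hn : 1 ≤ n) : (2:ℤ)^n + 2 ≤ 2 * NN n false 0 := by
  have := gT_ge_two n hn
  unfold gT at this
  linarith
/-- walk value of a word read with previous-letter state `s` -/
def wD : Bool → List Bool → ℤ
  | _, [] => 0
  | s, (b :: t) => (if s then (if b then (-1:ℤ) else 1) else 0) + wD b t

lemma card_walk : ∀ (n : ℕ) (s : Bool) (j : ℤ),
    (Finset.univ.filter (fun w : Fin n → Bool => j ≤ wD s (List.ofFn w))).card = NN n s j := by
  intro n
  induction n with
  | zero =>
      intro s j
      rw [NN_zero]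
      by_cases h : j ≤ (0:ℤ)
      · rw [if_pos h]
        rw [Finset.filter_true_of_mem]
        · simp
        · intro w _
          simp [List.ofFn_zero, wD, h]
      · rw [if_neg h]
        rw [Finset.filter_false_of_mem]
        · simp
        · intro w _
          simp [List.ofFn_zero, wD]
          omega
  | succ n ih =>
      intro s j
      rw [Finset.card_filter]
      have he : ∀ p : Bool × (Fin n → Bool),
          (fun p : Bool × (Fin n → Bool) =>
            if j ≤ wD s (List.ofFn (Fin.cons p.1 p.2 : Fin (n+1) → Bool)) then (1:ℕ) else 0) p =
          (fun w : Fin (n+1) → Bool => if j ≤ wD s (List.ofFn w) then (1:ℕ) else 0)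
            ((Fin.consEquiv (fun _ => Bool)) p) := by
        intro p
        rfl
      have hsum := Fintype.sum_equiv (Fin.consEquiv (fun _ => Bool))
        (fun p : Bool × (Fin n → Bool) =>
          if j ≤ wD s (List.ofFn (Fin.cons p.1 p.2 : Fin (n+1) → Bool)) then (1:ℕ) else 0)
        (fun w : Fin (n+1) → Bool => if j ≤ wD s (List.ofFn w) then (1:ℕ) else 0)
        he
      rw [← hsum, Fintype.sum_prod_type, Fintype.sum_bool]
      have hofn : ∀ (b : Bool) (w : Fin n → Bool),
          List.ofFn (Fin.cons b w : Fin (n+1) → Bool) = b :: List.ofFn w := by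
        intro b w
        rw [List.ofFn_succ]
        congr 1
      have hterm : ∀ (b : Bool), (∑ w : Fin n → Bool,
          if j ≤ wD s (List.ofFn (Fin.cons b w : Fin (n+1) → Bool)) then (1:ℕ) else 0)
          = NN n b (j - (if s then (if b then (-1:ℤ) else 1) else 0)) := by
        intro b
        rw [← ih b (j - (if s then (if b then (-1:ℤ) else 1) else 0))]
        rw [Finset.card_filter]
        apply Finset.sum_congr rfl
        intro w _
        rw [hofn b w]
        show (if j ≤ (if s then (if b then (-1:ℤ) else 1) else 0) + wD b (List.ofFn w) then (1:ℕ) else 0) = _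
        congr 1
        simp only [eq_iff_iff]
        constructor <;> intro h <;> omega
      rw [hterm true, hterm false]
      cases s with
      | true =>
          have e1 : j - (if (true:Bool) = true then (if (true:Bool) = true then (-1:ℤ) else 1) else 0) = j + 1 := by norm_num
          have e2 : j - (if (true:Bool) = true then (if (false:Bool) = true then (-1:ℤ) else 1) else 0) = j - 1 := by norm_num
          rw [e1, e2, NN_succ_true]
      | false =>
          have e1 : j - (if (false:Bool) = true then (if (true:Bool) = true then (-1:ℤ) else 1) else 0) = j := by norm_num
          have e2 : j - (if (false:Bool) = true then (if (false:Bool) = true then (-1:ℤ) else 1) else 0) = j := by norm_num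
          rw [e1, e2, NN_succ_false, Nat.add_comm]

/-- number of adjacent (p,q) patterns in a list -/
def lpc : List Bool → Bool → Bool → ℕ
  | [], _, _ => 0
  | [_], _, _ => 0
  | (a :: b :: t), p, q => (if a = p ∧ b = q then 1 else 0) + lpc (b :: t) p q

lemma wD_lpc : ∀ (l : List Bool) (a : Bool),
    wD a l = (lpc (a :: l) true false : ℤ) - (lpc (a :: l) true true : ℤ) := by
  intro l
  induction l with
  | nil =>
      intro a
      have h1 : lpc [a] true false = 0 := rfl
      have h2 : lpc [a] true true = 0 := rfl
      rw [h1, h2]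
      simp [wD]
  | cons b t ih =>
      intro a
      have : lpc (a :: b :: t) true false = (if a = true ∧ b = false then 1 else 0) + lpc (b :: t) true false := rfl
      rw [this]
      have : lpc (a :: b :: t) true true = (if a = true ∧ b = true then 1 else 0) + lpc (b :: t) true true := rfl
      rw [this]
      show (if a then (if b then (-1:ℤ) else 1) else 0) + wD b t = _
      rw [ih b]
      cases a <;> cases b <;> push_cast <;> simp <;> ring

lemma cnt_succ_succ (n : ℕ) (w : Fin (n+2) → Bool) (p q : Bool) :
    cnt w p q = (if w 0 = p ∧ w 1 = q then 1 else 0) + cnt (fun i => w i.succ) p q := by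
  unfold cnt
  rw [Finset.card_filter, Finset.card_filter, Fin.sum_univ_succ]
  congr 1
  · congr 1
    simp only [eq_iff_iff]
    constructor
    · rintro ⟨j, hj, hp, hq⟩
      refine ⟨hp, ?_⟩
      have : j = (1 : Fin (n+2)) := by
        apply Fin.ext
        rw [Fin.val_one]
        simpa using hj
      rw [← this]
      exact hq
    · rintro ⟨hp, hq⟩
      refine ⟨1, ?_, hp, hq⟩
      rw [Fin.val_one]
      simp
  · apply Finset.sum_congr rfl
    intro i _
    congr 1
    simp only [eq_iff_iff]
    constructor
    · rintro ⟨j, hj, hp, hq⟩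
      have hjv : (j:ℕ) = (i:ℕ) + 2 := by
        rw [hj, Fin.val_succ]
      have hjpos : 0 < (j:ℕ) := by omega
      have hjlt : (j:ℕ) < n + 2 := j.isLt
      refine ⟨⟨(j:ℕ) - 1, by omega⟩, by simp; omega, hp, ?_⟩
      have : (⟨(j:ℕ) - 1, by omega⟩ : Fin (n+1)).succ = j := by
        apply Fin.ext
        simp [Fin.val_succ]
        omega
      rw [this]
      exact hq
    · rintro ⟨j', hj', hp, hq⟩
      refine ⟨j'.succ, ?_, hp, hq⟩
      rw [Fin.val_succ, Fin.val_succ, hj']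

lemma cnt_eq_lpc : ∀ (n : ℕ) (w : Fin n → Bool) (p q : Bool),
    cnt w p q = lpc (List.ofFn w) p q := by
  intro n
  induction n with
  | zero =>
      intro w p q
      unfold cnt
      rw [List.ofFn_zero]
      simp [lpc]
  | succ n ih =>
      intro w p q
      cases n with
      | zero =>
          unfold cnt
          rw [Finset.filter_false_of_mem]
          · simp
            rfl
          · rintro i -
            rintro ⟨j, hj, -⟩
            have : (j:ℕ) < 1 := j.isLt
            omega
      | succ m =>
          rw [cnt_succ_succ m w p q, ih (fun i => w i.succ) p q, List.ofFn_succ (f := w),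
            List.ofFn_succ (f := fun i : Fin (m+1) => w i.succ)]
          have hrw : lpc (w 0 :: w (Fin.succ 0) :: List.ofFn (fun i : Fin m => w i.succ.succ)) p q
              = (if w 0 = p ∧ w (Fin.succ 0) = q then 1 else 0)
                + lpc (w (Fin.succ 0) :: List.ofFn (fun i : Fin m => w i.succ.succ)) p q := rfl
          rw [hrw, Fin.succ_zero_eq_one]

lemma lpc_false_cons (l : List Bool) (q : Bool) : lpc (false :: l) true q = lpc l true q := by
  cases l with
  | nil => rfl
  | cons b t =>
      show (if false = true ∧ b = q then 1 else 0) + lpc (b :: t) true q = lpc (b :: t) true q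
      simp

lemma cnt_walk (n : ℕ) (w : Fin n → Bool) :
    (cnt w true false : ℤ) - (cnt w true true : ℤ) = wD false (List.ofFn w) := by
  rw [cnt_eq_lpc n w true false, cnt_eq_lpc n w true true, wD_lpc (List.ofFn w) false]
  rw [lpc_false_cons, lpc_false_cons]

theorem stmt19 (n : ℕ) (hn : 2 ≤ n) :
    ((Finset.univ.filter (fun w : Fin n → Bool =>
        cnt w true false < cnt w true true)).card : ℚ) / 2 ^ n
      ≤ 1 / 2 - 1 / 2 ^ n := by
  obtain ⟨m, rfl⟩ : ∃ m, n = m + 1 := ⟨n - 1, by omega⟩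
  have hpred : ∀ w : Fin (m+1) → Bool,
      (cnt w true false < cnt w true true) ↔ ¬ ((0:ℤ) ≤ wD false (List.ofFn w)) := by
    intro w
    rw [← cnt_walk]
    omega
  have hfilter :
      (Finset.univ.filter (fun w : Fin (m+1) → Bool =>
        cnt w true false < cnt w true true))
      = (Finset.univ.filter (fun w : Fin (m+1) → Bool =>
        ¬ ((0:ℤ) ≤ wD false (List.ofFn w)))) :=
    Finset.filter_congr (fun w _ => hpred w)
  rw [hfilter, Finset.filter_not, Finset.card_sdiff_of_subset (Finset.filter_subset _ _)]
  have hcu : (Finset.univ : Finset (Fin (m+1) → Bool)).card = 2^(m+1) := by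
    rw [Finset.card_univ]
    simp [Fintype.card_fun]
  have hcw := card_walk (m+1) false 0
  have hNNle : NN (m+1) false 0 ≤ 2^(m+1) := by
    rw [← hcw, ← hcu]
    exact Finset.card_filter_le _ _
  have hmc := main_count (m+1) (by omega)
  -- integer bound
  have hZ : (((Finset.univ : Finset (Fin (m+1) → Bool)).card - (Finset.univ.filter
      (fun w : Fin (m+1) → Bool => (0:ℤ) ≤ wD false (List.ofFn w))).card : ℕ) : ℚ)
      ≤ 2^m - 1 := by
    rw [hcw, hcu]
    rw [Nat.cast_sub hNNle]
    have h2 : ((2:ℚ))^(m+1) = 2 * 2^m := by ring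
    have hNZ : (2:ℚ)^m + 1 ≤ (NN (m+1) false 0 : ℚ) := by
      have : ((2:ℤ)^(m+1) + 2 : ℤ) ≤ 2 * NN (m+1) false 0 := hmc
      have hq : ((2:ℚ)^(m+1) + 2 : ℚ) ≤ 2 * NN (m+1) false 0 := by exact_mod_cast this
      nlinarith [hq]
    push_cast
    linarith
  have hpos : (0:ℚ) < 2^(m+1) := by positivity
  rw [div_le_iff₀ hpos]
  have hrhs : (1/2 - 1/2^(m+1) : ℚ) * 2^(m+1) = 2^m - 1 := by
    rw [pow_succ]
    field_simp
    try ring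
  rw [hrhs]
  exact hZ
end
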